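/- For d₀ = 1 and 0 < u ≤ 2, with Θ uniform on [0, π/2] and X = |e^{iΘ} − u|, one has P(X ≤ 1) = (4/π) arctan( √( (2 − u)/(2 + u) ) ); and P(X ≤ 1) = 0 for u > 2. -/

import Mathlib

open MeasureTheory Real

lemma abs_iff_aux (u θ : ℝ) (hu : 0 < u) :
    ‖Complex.exp ((θ : ℂ) * Complex.I) - (u:ℂ)‖ ≤ 1 ↔ u ≤ 2 * Real.cos θ := by
  rw [Complex.norm_def, show (1:ℝ) = Real.sqrt 1 by simp,
    Real.sqrt_le_sqrt_iff zero_le_one]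
  simp only [Complex.normSq_apply, Complex.sub_re, Complex.sub_im,
    Complex.exp_ofReal_mul_I_re, Complex.exp_ofReal_mul_I_im, Complex.ofReal_re, Complex.ofReal_im]
  have h := Real.sin_sq_add_cos_sq θ
  constructor
  · intro h1; nlinarith
  · intro h1; nlinarith

lemma arccos_eq_aux (u : ℝ) (hu : 0 < u) (hu2 : u ≤ 2) :
    Real.arccos (u/2) = 2 * Real.arctan (Real.sqrt ((2 - u) / (2 + u))) := by
  set t := Real.sqrt ((2 - u) / (2 + u)) with ht
  have htnn : 0 ≤ t := Real.sqrt_nonneg _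
  have hfrac : 0 ≤ (2 - u) / (2 + u) := div_nonneg (by linarith) (by linarith)
  have ht2 : t ^ 2 = (2 - u) / (2 + u) := Real.sq_sqrt hfrac
  have ha : Real.arctan t < π / 2 := Real.arctan_lt_pi_div_two t
  have ha0 : 0 ≤ Real.arctan t := by simpa using Real.arctan_strictMono.monotone htnn
  have hcos : Real.cos (2 * Real.arctan t) = u / 2 := by
    rw [Real.cos_two_mul, Real.cos_arctan]
    rw [div_pow, one_pow, Real.sq_sqrt (by positivity : (0:ℝ) ≤ 1 + t ^ 2), ht2]
    field_simp
    ring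
  rw [← hcos, Real.arccos_cos (by linarith) (by linarith)]

/-- For unit link distance d₀ = 1 and Θ uniform on [0, π/2], X = |e^{iΘ} − u|:
P(X ≤ 1) = (4/π) arctan √((2−u)/(2+u)) for 0 < u ≤ 2, and P(X ≤ 1) = 0 for u > 2. -/
theorem nearfield_probability_unit (Ω : Type*) [MeasurableSpace Ω] (μ : Measure Ω)
    [IsProbabilityMeasure μ] (Θ : Ω → ℝ) (hΘ : Measurable Θ)
    (hunif : Measure.map Θ μ
      = (ENNReal.ofReal (2/π)) • (volume.restrict (Set.Icc (0:ℝ) (π/2))))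
    (u : ℝ) (hu : 0 < u) :
    (u ≤ 2 →
      (μ {ω | ‖Complex.exp ((Θ ω : ℂ) * Complex.I) - (u:ℂ)‖ ≤ 1}).toReal
        = (4/π) * Real.arctan (Real.sqrt ((2 - u) / (2 + u)))) ∧
    (2 < u →
      (μ {ω | ‖Complex.exp ((Θ ω : ℂ) * Complex.I) - (u:ℂ)‖ ≤ 1}).toReal = 0) := by
  have hπ : 0 < π := Real.pi_pos
  set S : Set ℝ := {θ | u ≤ 2 * Real.cos θ} with hS
  have hSm : MeasurableSet S :=
    (isClosed_le continuous_const (continuous_const.mul Real.continuous_cos)).measurableSet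
  have hset : {ω | ‖Complex.exp ((Θ ω : ℂ) * Complex.I) - (u:ℂ)‖ ≤ 1} = Θ ⁻¹' S := by
    ext ω; exact abs_iff_aux u (Θ ω) hu
  have hkey : μ {ω | ‖Complex.exp ((Θ ω : ℂ) * Complex.I) - (u:ℂ)‖ ≤ 1}
      = ENNReal.ofReal (2/π) * volume (S ∩ Set.Icc (0:ℝ) (π/2)) := by
    rw [hset, ← Measure.map_apply hΘ hSm, hunif, Measure.smul_apply,
      Measure.restrict_apply hSm, smul_eq_mul]
  constructor
  · intro hu2
    have hmem : -1 ≤ u / 2 ∧ u / 2 ≤ 1 := ⟨by linarith, by linarith⟩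
    have harcc : Real.cos (Real.arccos (u/2)) = u/2 := Real.cos_arccos hmem.1 hmem.2
    have harcnn : 0 ≤ Real.arccos (u/2) := Real.arccos_nonneg _
    have harcpi : Real.arccos (u/2) ≤ π := Real.arccos_le_pi _
    have harchalf : Real.arccos (u/2) ≤ π / 2 :=
      (Real.arccos_le_pi_div_two).2 (by linarith)
    have hseteq : S ∩ Set.Icc (0:ℝ) (π/2) = Set.Icc 0 (Real.arccos (u/2)) := by
      ext θ
      simp only [Set.mem_inter_iff, Set.mem_Icc, hS, Set.mem_setOf_eq]
      constructor
      · rintro ⟨h1, h2, h3⟩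
        refine ⟨h2, ?_⟩
        by_contra hlt
        push_neg at hlt
        have := Real.strictAntiOn_cos ⟨harcnn, harcpi⟩ ⟨h2, by linarith⟩ hlt
        rw [harcc] at this
        linarith
      · rintro ⟨h1, h2⟩
        refine ⟨?_, h1, le_trans h2 harchalf⟩
        have : Real.cos (Real.arccos (u/2)) ≤ Real.cos θ := by
          rcases eq_or_lt_of_le h2 with h | h
          · rw [h]
          · exact le_of_lt (Real.strictAntiOn_cos ⟨h1, by linarith⟩ ⟨harcnn, harcpi⟩ h)
        rw [harcc] at this
        linarith
    rw [hkey, hseteq, Real.volume_Icc, ENNReal.toReal_mul, ENNReal.toReal_ofReal (by positivity),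
      ENNReal.toReal_ofReal (by linarith), sub_zero,
      arccos_eq_aux u hu hu2]
    field_simp
    ring
  · intro hu2
    have hseteq : S ∩ Set.Icc (0:ℝ) (π/2) = ∅ := by
      ext θ
      simp only [Set.mem_inter_iff, Set.mem_Icc, hS, Set.mem_setOf_eq, Set.mem_empty_iff_false,
        iff_false, not_and]
      intro h1
      have := Real.cos_le_one θ
      intro h; linarith
    rw [hkey, hseteq, measure_empty, mul_zero, ENNReal.toReal_zero]
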